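/- The infinite series ∑_{n=1}^∞ 1/(n(2n-1)(4n-3)) converges to π/3. -/

import Mathlib

open Real Filter Finset Topology

private noncomputable def gg (n : ℕ) : ℝ := 1 / (((n:ℝ)+1) * (2*(n:ℝ)+1) * (4*(n:ℝ)+1))

private lemma key (N : ℕ) :
    ∑ i ∈ range N, gg i
      = (4/3) * (∑ i ∈ range (2*N), (-1:ℝ)^i / (2*i+1))
        + (4/3) * ((∑ i ∈ range (4*N), (-1:ℝ)^i / (i+1))
            - (∑ i ∈ range (2*N), (-1:ℝ)^i / (i+1))) := by
  induction N with
  | zero => simp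
  | succ N ih =>
      have e2 : 2 * (N+1) = (2*N) + 1 + 1 := by ring
      have e4 : 4 * (N+1) = (4*N) + 1 + 1 + 1 + 1 := by ring
      rw [sum_range_succ, e2, e4, sum_range_succ, sum_range_succ, sum_range_succ,
        sum_range_succ, sum_range_succ, sum_range_succ, sum_range_succ, sum_range_succ, ih]
      have hx : (0:ℝ) ≤ (N:ℝ) := Nat.cast_nonneg N
      set x : ℝ := (N:ℝ) with hxdef
      have h1 : x + 1 ≠ 0 := by positivity
      have h2 : 2*x + 1 ≠ 0 := by positivity
      have h3 : 4*x + 1 ≠ 0 := by positivity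
      have hp2 : (-1:ℝ) ^ (2*N) = 1 := by
        rw [pow_mul]; norm_num
      have hp4 : (-1:ℝ) ^ (4*N) = 1 := by
        rw [show 4*N = 2*(2*N) by ring, pow_mul]; norm_num
      simp only [gg, pow_succ, hp2, hp4]
      push_cast
      have h4 : 4*x + 2 ≠ 0 := by positivity
      have h5 : 4*x + 3 ≠ 0 := by positivity
      have h6 : 4*x + 4 ≠ 0 := by positivity
      have h7 : 2*x + 2 ≠ 0 := by positivity
      have h8 : 2*x + 3 ≠ 0 := by positivity
      have h9 : 4*x + 5 ≠ 0 := by positivity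
      field_simp
      ring

private lemma gg_tendsto :
    Tendsto (fun N => ∑ i ∈ range N, gg i) atTop (𝓝 (π/3)) := by
  -- alternating harmonic series converges to some l
  obtain ⟨l, hl⟩ :
      ∃ l, Tendsto (fun m => ∑ i ∈ range m, (-1:ℝ)^i / (i+1)) atTop (𝓝 l) := by
    have h := Antitone.tendsto_alternating_series_of_tendsto_zero
      (f := fun i : ℕ => 1/((i:ℝ)+1))
      (antitone_iff_forall_lt.mpr fun a b hab => by
        have : (a:ℝ) + 1 ≤ (b:ℝ) + 1 := by exact_mod_cast Nat.succ_le_succ hab.le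
        gcongr)
      tendsto_one_div_add_atTop_nhds_zero_nat
    obtain ⟨l, hl⟩ := h
    exact ⟨l, by simpa [mul_one_div, div_eq_mul_inv] using hl⟩
  have h2 : Tendsto (fun N : ℕ => 2*N) atTop atTop :=
    StrictMono.tendsto_atTop (fun a b hab => by omega)
  have h4 : Tendsto (fun N : ℕ => 4*N) atTop atTop :=
    StrictMono.tendsto_atTop (fun a b hab => by omega)
  have hL := Real.tendsto_sum_pi_div_four.comp h2
  have hA4 := hl.comp h4
  have hA2 := hl.comp h2
  have : Tendsto (fun N =>
      (4/3) * (∑ i ∈ range (2*N), (-1:ℝ)^i / (2*i+1))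
        + (4/3) * ((∑ i ∈ range (4*N), (-1:ℝ)^i / (i+1))
            - (∑ i ∈ range (2*N), (-1:ℝ)^i / (i+1)))) atTop
      (𝓝 ((4/3) * (π/4) + (4/3) * (l - l))) :=
    ((hL.const_mul _).add ((hA4.sub hA2).const_mul _))
  have : Tendsto (fun N =>
      (4/3) * (∑ i ∈ range (2*N), (-1:ℝ)^i / (2*i+1))
        + (4/3) * ((∑ i ∈ range (4*N), (-1:ℝ)^i / (i+1))
            - (∑ i ∈ range (2*N), (-1:ℝ)^i / (i+1)))) atTop (𝓝 (π/3)) := by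
    convert this using 2; ring
  simpa only [← key] using this

theorem stmt_0 : HasSum (fun n : ℕ+ => 1 / ((n : ℝ) * (2*(n : ℝ)-1) * (4*(n : ℝ)-3))) (π / 3) := by
  rw [← Equiv.pnatEquivNat.symm.hasSum_iff]
  have heq : ((fun n : ℕ+ => 1 / ((n : ℝ) * (2*(n : ℝ)-1) * (4*(n : ℝ)-3)))
      ∘ Equiv.pnatEquivNat.symm) = gg := by
    funext n
    simp only [Function.comp, Equiv.pnatEquivNat, Equiv.coe_fn_symm_mk, gg]
    have : ((n.succPNat : ℕ+) : ℝ) = (n:ℝ) + 1 := by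
      norm_cast
    rw [this]
    ring_nf
  rw [heq]
  have hnn : ∀ i, 0 ≤ gg i := fun i => by unfold gg; positivity
  exact (hasSum_iff_tendsto_nat_of_nonneg hnn _).mpr gg_tendsto
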